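/- Let G be a connected finite simple graph and let H be a nonempty connected induced subgraph of G. Then mic(G) ≥ mic(H) + (|G| − |H|), where mic(H) is computed with respect to the degrees in H. In particular, every nonempty connected finite simple graph G satisfies mic(G) ≥ |G| − 1. -/

import Mathlib

open SimpleGraph Finset

/-- The maximum independent cover number of `G`: the maximum of `∑_{v ∈ I} d_G(v)` over
all independent sets `I` of `G`. -/
def mic {V : Type*} [Fintype V] [DecidableEq V] (G : SimpleGraph V)
    [DecidableRel G.Adj] : ℕ :=
  ((Finset.univ : Finset (Finset V)).filter fun I => ∀ u ∈ I, ∀ v ∈ I, ¬ G.Adj u v).sup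
    fun I => ∑ v ∈ I, G.degree v

/-- The degree of `v` in the subgraph of `G` induced on `s`. -/
def degIn {V : Type*} [DecidableEq V] (G : SimpleGraph V) [DecidableRel G.Adj]
    (s : Finset V) (v : V) : ℕ :=
  (s.filter fun u => G.Adj v u).card

/-- The maximum independent cover number of the subgraph of `G` induced on `s`, computed
with respect to degrees in that induced subgraph. -/
def micOn {V : Type*} [Fintype V] [DecidableEq V] (G : SimpleGraph V)
    [DecidableRel G.Adj] (s : Finset V) : ℕ :=
  (s.powerset.filter fun I => ∀ u ∈ I, ∀ v ∈ I, ¬ G.Adj u v).sup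
    fun I => ∑ v ∈ I, degIn G s v

section Aux

variable {V : Type*} [Fintype V] [DecidableEq V] (G : SimpleGraph V) [DecidableRel G.Adj]

lemma degIn_insert (s : Finset V) (w v : V) (hw : w ∉ s) :
    degIn G (insert w s) v = degIn G s v + (if G.Adj v w then 1 else 0) := by
  unfold degIn
  rw [Finset.filter_insert]
  split
  · rw [Finset.card_insert_of_notMem (by simp [hw])]
  · simp

lemma le_micOn (s I : Finset V) (hIs : I ⊆ s)
    (hind : ∀ u ∈ I, ∀ v ∈ I, ¬ G.Adj u v) :
    ∑ v ∈ I, degIn G s v ≤ micOn G s :=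
  Finset.le_sup (f := fun I => ∑ v ∈ I, degIn G s v)
    (Finset.mem_filter.mpr ⟨Finset.mem_powerset.mpr hIs, hind⟩)

lemma micOn_step (s : Finset V) (u w : V) (hu : u ∈ s) (hw : w ∉ s)
    (hadj : G.Adj u w) : micOn G s + 1 ≤ micOn G (insert w s) := by
  obtain ⟨I, hI, hEq⟩ := Finset.exists_mem_eq_sup
    (s.powerset.filter fun I => ∀ u ∈ I, ∀ v ∈ I, ¬ G.Adj u v)
    ⟨∅, by simp⟩ (fun I => ∑ v ∈ I, degIn G s v)
  rw [Finset.mem_filter, Finset.mem_powerset] at hI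
  obtain ⟨hIs, hind⟩ := hI
  have hEq' : micOn G s = ∑ v ∈ I, degIn G s v := hEq
  have hsum : ∀ J : Finset V, ∑ v ∈ J, degIn G (insert w s) v
      = ∑ v ∈ J, degIn G s v + ∑ v ∈ J, (if G.Adj v w then 1 else 0) := by
    intro J
    rw [← Finset.sum_add_distrib]
    exact Finset.sum_congr rfl fun v _ => degIn_insert G s w v hw
  by_cases hcase : ∃ x ∈ I, G.Adj x w
  · obtain ⟨x, hx, hxw⟩ := hcase
    have h1 : (1 : ℕ) ≤ ∑ v ∈ I, (if G.Adj v w then 1 else 0) := by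
      have := Finset.single_le_sum (f := fun v => if G.Adj v w then 1 else 0)
        (fun v _ => Nat.zero_le _) hx
      simpa [hxw] using this
    have h2 : ∑ v ∈ I, degIn G (insert w s) v ≤ micOn G (insert w s) :=
      le_micOn G _ I (hIs.trans (Finset.subset_insert _ _)) hind
    rw [hsum I] at h2
    omega
  · push_neg at hcase
    have hwI : w ∉ I := fun h => hw (hIs h)
    have hJind : ∀ a ∈ insert w I, ∀ b ∈ insert w I, ¬ G.Adj a b := by
      intro a ha b hb
      rcases Finset.mem_insert.mp ha with rfl | ha' <;>
        rcases Finset.mem_insert.mp hb with rfl | hb'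
      · exact G.irrefl
      · exact fun h => hcase b hb' h.symm
      · exact hcase a ha'
      · exact hind a ha' b hb'
    have hJsub : insert w I ⊆ insert w s := Finset.insert_subset_insert _ hIs
    have h2 : ∑ v ∈ insert w I, degIn G (insert w s) v ≤ micOn G (insert w s) :=
      le_micOn G _ _ hJsub hJind
    rw [Finset.sum_insert hwI, hsum I] at h2
    have hdw : 1 ≤ degIn G (insert w s) w := by
      have : u ∈ (insert w s).filter fun x => G.Adj w x :=
        Finset.mem_filter.mpr ⟨Finset.mem_insert_of_mem hu, hadj.symm⟩
      exact Finset.card_pos.mpr ⟨u, this⟩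
    omega

lemma micOn_grow (hG : G.Connected) :
    ∀ (k : ℕ) (s : Finset V), s.Nonempty → Fintype.card V - s.card = k →
      micOn G s + k ≤ micOn G Finset.univ := by
  intro k
  induction k with
  | zero =>
    intro s hs hk
    have hle : s.card ≤ Fintype.card V := Finset.card_le_univ s
    have : s = Finset.univ := Finset.eq_univ_of_card s (by omega)
    simp [this]
  | succ k ih =>
    intro s hs hk
    have hne : s ≠ Finset.univ := by
      intro h; rw [h, Finset.card_univ] at hk; omega
    obtain ⟨b, hb⟩ : ∃ b, b ∉ s := by
      by_contra h; push_neg at h; exact hne (Finset.eq_univ_iff_forall.mpr h)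
    obtain ⟨a, ha⟩ := hs
    obtain ⟨p⟩ := hG.preconnected a b
    obtain ⟨d, _, hd1, hd2⟩ := p.exists_boundary_dart (↑s : Set V)
      (by exact_mod_cast ha) (by exact_mod_cast hb)
    have hd1' : d.fst ∈ s := by exact_mod_cast hd1
    have hd2' : d.snd ∉ s := by exact_mod_cast hd2
    have hstep := micOn_step G s d.fst d.snd hd1' hd2' d.adj
    have hle : (insert d.snd s).card ≤ Fintype.card V := Finset.card_le_univ _
    rw [Finset.card_insert_of_notMem hd2'] at hle
    have hcard : Fintype.card V - (insert d.snd s).card = k := by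
      rw [Finset.card_insert_of_notMem hd2']; omega
    have := ih (insert d.snd s) ⟨a, Finset.mem_insert_of_mem ha⟩ hcard
    omega

lemma mic_eq_micOn_univ : mic G = micOn G Finset.univ := by
  unfold mic micOn
  rw [Finset.powerset_univ]
  congr 1
  funext I
  refine Finset.sum_congr rfl fun v _ => ?_
  unfold degIn
  rw [SimpleGraph.degree]
  congr 1
  ext u
  simp [SimpleGraph.mem_neighborFinset]

end Aux

/-- If `G` is connected and `H` is a nonempty connected induced subgraph of `G` (on the
vertex set `s`), then `mic(G) ≥ mic(H) + (|G| - |H|)`. In particular (second conjunct),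
`mic(G) ≥ |G| - 1` for every nonempty connected graph `G`. -/
theorem mic_ge_of_connected_induced {V : Type*} [Fintype V] [DecidableEq V]
    (G : SimpleGraph V) [DecidableRel G.Adj] (hG : G.Connected)
    (s : Finset V) (hs : s.Nonempty) (hconn : (G.induce (s : Set V)).Connected) :
    micOn G s + (Fintype.card V - s.card) ≤ mic G ∧
      Fintype.card V - 1 ≤ mic G := by
  rw [mic_eq_micOn_univ G]
  constructor
  · exact micOn_grow G hG _ s hs rfl
  · obtain ⟨a, _⟩ := hs
    have h := micOn_grow G hG (Fintype.card V - 1) {a} ⟨a, Finset.mem_singleton_self a⟩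
      (by rw [Finset.card_singleton])
    omega
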